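/- Let p, q, k, n be positive integers with n ≤ ⌊p/(k+1)⌋·(q+1) + q + k − 1 and p ≥ k+1. Then any n-vertex graph G with tree-width at most k has a set S of at most p vertices such that each connected component of G − S has at most q vertices. -/

import Mathlib

open SimpleGraph

namespace TWaux

set_option linter.unusedSectionVars false

attribute [local instance] Classical.propDecidable

section Graph
variable {V : Type} [Finite V] {G : SimpleGraph V}

lemma walk_part {X : Set V} {ι : Type} (PT : ι → Finset V)
    (huni : ∀ (a : X) (i j : ι), ↑a ∈ PT i → ↑a ∈ PT j → i = j)
    (hadj : ∀ a b : X, (G.induce X).Adj a b → ∃ i, ↑a ∈ PT i ∧ ↑b ∈ PT i) :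
    ∀ {a b : X} (_ : (G.induce X).Walk a b) (i : ι), ↑a ∈ PT i → ↑b ∈ PT i := by
  intro a b w
  induction w with
  | nil => exact fun i h => h
  | @cons a a' b h p ih =>
    intro i hi
    obtain ⟨j, h1, h2⟩ := hadj _ _ h
    obtain rfl := huni _ i j hi h1
    exact ih i h2

lemma comp_part {X : Set V} {ι : Type} (PT : ι → Finset V)
    (hcov : ∀ a : X, ∃ i, ↑a ∈ PT i)
    (huni : ∀ (a : X) (i j : ι), ↑a ∈ PT i → ↑a ∈ PT j → i = j)
    (hadj : ∀ a b : X, (G.induce X).Adj a b → ∃ i, ↑a ∈ PT i ∧ ↑b ∈ PT i)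
    (c : (G.induce X).ConnectedComponent) :
    ∃ i, ∀ x : X, x ∈ c.supp → ↑x ∈ PT i := by
  obtain ⟨v, rfl⟩ := c.exists_rep
  obtain ⟨i, hi⟩ := hcov v
  refine ⟨i, fun x hx => ?_⟩
  change (G.induce X).connectedComponentMk x = (G.induce X).connectedComponentMk v at hx
  obtain ⟨w⟩ := (ConnectedComponent.exact hx).symm
  exact walk_part PT huni hadj w i hi

lemma comp_card_le {X : Set V} (c : (G.induce X).ConnectedComponent) (P : Finset V)
    (h : ∀ x : X, x ∈ c.supp → ↑x ∈ P) : Nat.card c.supp ≤ P.card := by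
  have hinj : Function.Injective
      (fun x : c.supp => (⟨((x : X) : V), h x x.2⟩ : {y : V // y ∈ P})) := by
    intro x y hxy
    have h1 : ((x : X) : V) = ((y : X) : V) := by
      simpa using congrArg Subtype.val hxy
    exact Subtype.ext (Subtype.ext h1)
  calc Nat.card c.supp ≤ Nat.card {y : V // y ∈ P} :=
        Nat.card_le_card_of_injective _ hinj
    _ = P.card := Nat.card_eq_finsetCard P

lemma reach_shrink {X Y : Set V} (hYX : Y ⊆ X)
    (hcl : ∀ u v : X, (G.induce X).Adj u v → (u : V) ∈ Y → (v : V) ∈ Y) :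
    ∀ {a b : X} (_ : (G.induce X).Walk a b) (ha : (a : V) ∈ Y) (hb : (b : V) ∈ Y),
      (G.induce Y).Reachable ⟨a, ha⟩ ⟨b, hb⟩ := by
  intro a b w
  induction w with
  | nil => intro ha hb; rfl
  | @cons a a' b h p ih =>
    intro ha hb
    have h2 : (a' : V) ∈ Y := hcl _ _ h ha
    refine Reachable.trans (Adj.reachable ?_) (ih h2 hb)
    have : G.Adj (a : V) (a' : V) := by simpa using h
    simpa using this

lemma comp_transfer {X Y : Set V} (hYX : Y ⊆ X)
    (hcl : ∀ u v : X, (G.induce X).Adj u v → (u : V) ∈ Y → (v : V) ∈ Y)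
    {q : ℕ}
    (hY : ∀ c : (G.induce Y).ConnectedComponent, Nat.card c.supp ≤ q)
    (c : (G.induce X).ConnectedComponent)
    (hc : ∀ x : X, x ∈ c.supp → (x : V) ∈ Y) :
    Nat.card c.supp ≤ q := by
  obtain ⟨v, rfl⟩ := c.exists_rep
  have hv : (v : V) ∈ Y := hc v (by change (G.induce X).connectedComponentMk v = (G.induce X).connectedComponentMk v; rfl)
  set c' := (G.induce Y).connectedComponentMk ⟨(v : V), hv⟩ with hc'
  have hmap : ∀ x : ((G.induce X).connectedComponentMk v).supp,
      ∃ hxy : ((x : X) : V) ∈ Y, (⟨((x : X) : V), hxy⟩ : Y) ∈ c'.supp := by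
    rintro ⟨x, hx⟩
    refine ⟨hc x hx, ?_⟩
    rw [ConnectedComponent.mem_supp_iff] at hx ⊢
    obtain ⟨w⟩ := ConnectedComponent.exact hx
    rw [hc']
    exact ConnectedComponent.sound ((reach_shrink hYX hcl w (hc x hx) hv))
  have hinj : Function.Injective
      (fun x : ((G.induce X).connectedComponentMk v).supp =>
        (⟨⟨((x : X) : V), (hmap x).1⟩, (hmap x).2⟩ : c'.supp)) := by
    intro x y hxy
    have h1 : ((x : X) : V) = ((y : X) : V) := by
      simpa using congrArg (fun z : c'.supp => ((z : Y) : V)) hxy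
    exact Subtype.ext (Subtype.ext h1)
  exact le_trans (Nat.card_le_card_of_injective _ hinj) (hY c')

lemma split_comps {A C : Finset V} {q : ℕ}
    (hdisj : ∀ x ∈ A, x ∉ C)
    (hsep : ∀ u ∈ A, ∀ w ∈ C, ¬ G.Adj u w)
    (hA : ∀ c : (G.induce (A : Set V)).ConnectedComponent, Nat.card c.supp ≤ q)
    (hC : ∀ c : (G.induce (C : Set V)).ConnectedComponent, Nat.card c.supp ≤ q)
    (c : (G.induce ((A ∪ C : Finset V) : Set V)).ConnectedComponent) :
    Nat.card c.supp ≤ q := by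
  have hmemX : ∀ x : ((A ∪ C : Finset V) : Set V), (x : V) ∈ A ∨ (x : V) ∈ C := by
    intro x; have := x.2; simpa using this
  have hadjG : ∀ a b : ((A ∪ C : Finset V) : Set V),
      (G.induce ((A ∪ C : Finset V) : Set V)).Adj a b → G.Adj (a : V) (b : V) := by
    intro a b h; simpa using h
  have hclA : ∀ u v : ((A ∪ C : Finset V) : Set V),
      (G.induce ((A ∪ C : Finset V) : Set V)).Adj u v → (u : V) ∈ (A : Set V) →
        (v : V) ∈ (A : Set V) := by
    intro u v h hu
    rcases hmemX v with h' | h'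
    · exact h'
    · exact absurd (hadjG u v h) (hsep _ hu _ h')
  have hclC : ∀ u v : ((A ∪ C : Finset V) : Set V),
      (G.induce ((A ∪ C : Finset V) : Set V)).Adj u v → (u : V) ∈ (C : Set V) →
        (v : V) ∈ (C : Set V) := by
    intro u v h hu
    rcases hmemX v with h' | h'
    · exact absurd (hadjG u v h).symm (hsep _ h' _ hu)
    · exact h'
  have key : (∀ x : ((A ∪ C : Finset V) : Set V), x ∈ c.supp → (x : V) ∈ A) ∨
      (∀ x : ((A ∪ C : Finset V) : Set V), x ∈ c.supp → (x : V) ∈ C) := by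
    obtain ⟨i, hi⟩ := comp_part (ι := Bool) (fun b => cond b A C)
      (fun a => by
        rcases hmemX a with h | h
        · exact ⟨true, h⟩
        · exact ⟨false, h⟩)
      (fun a i j hi hj => by
        cases i <;> cases j
        · rfl
        · exact absurd hi (hdisj _ hj)
        · exact absurd hj (hdisj _ hi)
        · rfl)
      (fun a b h => by
        rcases hmemX a with ha | ha
        · exact ⟨true, ha, hclA a b h ha⟩
        · exact ⟨false, ha, hclC a b h ha⟩) c
    cases i
    · right; intro x hx; exact hi x hx
    · left; intro x hx; exact hi x hx
  have hsubA : (A : Set V) ⊆ ((A ∪ C : Finset V) : Set V) := by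
    intro x hx; simp at hx ⊢; exact Or.inl hx
  have hsubC : (C : Set V) ⊆ ((A ∪ C : Finset V) : Set V) := by
    intro x hx; simp at hx ⊢; exact Or.inr hx
  rcases key with hkey | hkey
  · exact comp_transfer hsubA hclA hA c hkey
  · exact comp_transfer hsubC hclC hC c hkey

end Graph

inductive RT (V : Type) : Type
  | node : Finset V → List (RT V) → RT V

namespace RT
variable {V : Type}

def bag : RT V → Finset V
  | node B _ => B

mutual
  noncomputable def vs : RT V → Finset V
    | .node B cs => B ∪ vsL cs
  termination_by d => sizeOf d
  noncomputable def vsL : List (RT V) → Finset V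
    | [] => ∅
    | c :: cs => vs c ∪ vsL cs
  termination_by l => sizeOf l
end

lemma vs_node (B : Finset V) (cs : List (RT V)) : vs (.node B cs) = B ∪ vsL cs := by
  simp [vs]

lemma mem_vsL {l : List (RT V)} {u : V} : u ∈ vsL l ↔ ∃ c ∈ l, u ∈ vs c := by
  induction l with
  | nil => simp [vsL]
  | cons c l ih => simp [vsL, ih]

lemma bag_subset_vs (d : RT V) : d.bag ⊆ d.vs := by
  cases d with
  | node B cs => rw [bag, vs_node]; exact Finset.subset_union_left

lemma child_vs_subset {B : Finset V} {cs : List (RT V)} {c : RT V} (hc : c ∈ cs) :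
    vs c ⊆ vs (.node B cs) := by
  rw [vs_node]
  intro x hx
  exact Finset.mem_union_right _ (mem_vsL.mpr ⟨c, hc, hx⟩)

theorem strong_ind {motive : RT V → Prop}
    (h : ∀ B cs, (∀ c ∈ cs, motive c) → motive (.node B cs)) : ∀ d, motive d := by
  have key : ∀ (n : ℕ) (d : RT V), sizeOf d ≤ n → motive d := by
    intro n
    induction n with
    | zero =>
      intro d hd
      cases d with
      | node B cs => simp at hd
    | succ n ih =>
      intro d hd
      cases d with
      | node B cs =>
        refine h B cs (fun c hc => ih c ?_)
        have h1 := List.sizeOf_lt_of_mem hc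
        have h2 : sizeOf (RT.node B cs) = 1 + sizeOf B + sizeOf cs := by simp
        omega
  exact fun d => key (sizeOf d) d le_rfl

variable (G : SimpleGraph V) (k : ℕ)

mutual
  def Good : RT V → Prop
    | .node B cs =>
        B.card ≤ k + 1 ∧
        (∀ c ∈ cs, vs c ∩ B ⊆ c.bag) ∧
        List.Pairwise (fun c c' => vs c ∩ vs c' ⊆ B) cs ∧
        (∀ c ∈ cs, (c.bag \ B).card ≤ 1) ∧
        (∀ u v : V, G.Adj u v → u ∈ B ∪ vsL cs → v ∈ B ∪ vsL cs →
          (u ∈ B ∧ v ∈ B) ∨ ∃ c ∈ cs, u ∈ vs c ∧ v ∈ vs c) ∧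
        GoodL cs
  termination_by d => sizeOf d
  def GoodL : List (RT V) → Prop
    | [] => True
    | c :: cs => Good c ∧ GoodL cs
  termination_by l => sizeOf l
end

lemma goodL_iff {l : List (RT V)} : GoodL G k l ↔ ∀ c ∈ l, Good G k c := by
  induction l with
  | nil => simp [GoodL]
  | cons c l ih => simp [GoodL, ih]

lemma good_node {B : Finset V} {cs : List (RT V)} :
    Good G k (.node B cs) ↔
      (B.card ≤ k + 1 ∧
        (∀ c ∈ cs, vs c ∩ B ⊆ c.bag) ∧
        List.Pairwise (fun c c' => vs c ∩ vs c' ⊆ B) cs ∧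
        (∀ c ∈ cs, (c.bag \ B).card ≤ 1) ∧
        (∀ u v : V, G.Adj u v → u ∈ B ∪ vsL cs → v ∈ B ∪ vsL cs →
          (u ∈ B ∧ v ∈ B) ∨ ∃ c ∈ cs, u ∈ vs c ∧ v ∈ vs c) ∧
        ∀ c ∈ cs, Good G k c) := by
  rw [show Good G k (.node B cs) = _ from by rw [Good]]
  rw [goodL_iff]


section Chop
variable [Finite V]

theorem chop {G : SimpleGraph V} {k q : ℕ} :
    ∀ d : RT V, Good G k d →
      q + max d.bag.card 1 ≤ d.vs.card →
      ∃ X A : Finset V,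
        X ⊆ d.vs ∧ A ⊆ d.vs ∧ (∀ x ∈ X, x ∉ A) ∧ (∀ x ∈ A, x ∉ d.bag) ∧
        X.card ≤ k + 1 ∧ q + max X.card 1 ≤ X.card + A.card ∧
        (∀ u ∈ A, ∀ w ∈ d.vs, w ∉ X → w ∉ A → ¬ G.Adj u w) ∧
        (∀ c : (G.induce (A : Set V)).ConnectedComponent, Nat.card c.supp ≤ q) := by
  refine strong_ind ?_
  intro B cs IH hgood hmass
  have hbag : (RT.node B cs).bag = B := rfl
  rw [good_node] at hgood
  obtain ⟨hwidth, hiii, hpw, hnest, hedge, hkids⟩ := hgood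
  have hpairs : ∀ c ∈ cs, ∀ c' ∈ cs, c ≠ c' → vs c ∩ vs c' ⊆ B := by
    intro c hc c' hc' hne
    haveI : Std.Symm (fun c c' : RT V => vs c ∩ vs c' ⊆ B) :=
      ⟨fun a b hab => by intro x hx; rw [Finset.inter_comm] at hx; exact hab hx⟩
    exact List.Pairwise.forall hpw hc hc' hne
  by_cases hex : ∃ c ∈ cs, q + max c.bag.card 1 ≤ c.vs.card
  · obtain ⟨c, hc, hcm⟩ := hex
    obtain ⟨X, A, h1, h2, h3, h4, h5, h6, h7, h8⟩ := IH c hc (hkids c hc) hcm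
    have hAnB : ∀ x ∈ A, x ∉ B := by
      intro x hx hxB
      exact h4 x hx (hiii c hc (Finset.mem_inter.mpr ⟨h2 hx, hxB⟩))
    refine ⟨X, A, h1.trans (child_vs_subset hc), h2.trans (child_vs_subset hc),
      h3, ?_, h5, h6, ?_, h8⟩
    · intro x hx; rw [hbag]; exact hAnB x hx
    · intro u hu w hw hwX hwA hadj
      by_cases hwc : w ∈ vs c
      · exact h7 u hu w hwc hwX hwA hadj
      · have hu' : u ∈ B ∪ vsL cs := by
          rw [← vs_node]; exact child_vs_subset hc (h2 hu)
        have hw' : w ∈ B ∪ vsL cs := by rw [← vs_node]; exact hw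
        rcases hedge u w hadj hu' hw' with ⟨huB, _⟩ | ⟨c', hc', huc', hwc'⟩
        · exact hAnB u hu huB
        · by_cases hcc : c = c'
          · exact hwc (hcc ▸ hwc')
          · exact hAnB u hu
              (hpairs c hc c' hc' hcc (Finset.mem_inter.mpr ⟨h2 hu, huc'⟩))
  · push_neg at hex
    refine ⟨B, vs (.node B cs) \ B, ?_, Finset.sdiff_subset, ?_, ?_,
      hwidth, ?_, ?_, ?_⟩
    · rw [← hbag]; exact bag_subset_vs _
    · intro x hx hx2; exact (Finset.mem_sdiff.mp hx2).2 hx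
    · intro x hx; rw [hbag]; exact (Finset.mem_sdiff.mp hx).2
    · have hsplit := Finset.card_sdiff_add_card_eq_card (bag_subset_vs (.node B cs))
      rw [hbag] at hsplit hmass
      omega
    · intro u hu w hw hwX hwA hadj
      exact hwA (Finset.mem_sdiff.mpr ⟨hw, hwX⟩)
    · intro comp
      have hmem : ∀ a : ((vs (.node B cs) \ B : Finset V) : Set V),
          (a : V) ∈ vs (.node B cs) ∧ (a : V) ∉ B := by
        intro a
        have := a.2
        rw [Finset.mem_coe, Finset.mem_sdiff] at this
        exact this
      obtain ⟨i, hi⟩ := comp_part (ι := {c : RT V // c ∈ cs}) (fun c => vs c.1 \ B)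
        (fun a => by
          obtain ⟨hav, hanb⟩ := hmem a
          have hav' : (a : V) ∈ B ∪ vsL cs := by rw [← vs_node]; exact hav
          rcases Finset.mem_union.mp hav' with h | h
          · exact absurd h hanb
          · obtain ⟨c, hc, hvc⟩ := mem_vsL.mp h
            exact ⟨⟨c, hc⟩, Finset.mem_sdiff.mpr ⟨hvc, hanb⟩⟩)
        (fun a i j hi hj => by
          by_contra hne
          have hne' : i.1 ≠ j.1 := fun h => hne (Subtype.ext h)
          rw [Finset.mem_sdiff] at hi hj
          exact hj.2 (hpairs i.1 i.2 j.1 j.2 hne' (Finset.mem_inter.mpr ⟨hi.1, hj.1⟩)))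
        (fun a b hadj => by
          have hadj' : G.Adj (a : V) (b : V) := by simpa using hadj
          obtain ⟨hav, hanb⟩ := hmem a
          obtain ⟨hbv, hbnb⟩ := hmem b
          rcases hedge _ _ hadj' (by rw [← vs_node]; exact hav)
              (by rw [← vs_node]; exact hbv) with ⟨h1', _⟩ | ⟨c, hc, h1', h2'⟩
          · exact absurd h1' hanb
          · exact ⟨⟨c, hc⟩, Finset.mem_sdiff.mpr ⟨h1', hanb⟩,
              Finset.mem_sdiff.mpr ⟨h2', hbnb⟩⟩) comp
      refine (comp_card_le comp (vs i.1 \ B) hi).trans ?_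
      have h1 : (vs i.1).card < q + max i.1.bag.card 1 := hex i.1 i.2
      have h2 : (vs i.1 \ B).card + (vs i.1 ∩ B).card = (vs i.1).card :=
        Finset.card_sdiff_add_card_inter _ _
      have h3 : (i.1.bag ∩ B).card ≤ (vs i.1 ∩ B).card := by
        refine Finset.card_le_card ?_
        intro x hx
        rw [Finset.mem_inter] at hx ⊢
        exact ⟨bag_subset_vs _ hx.1, hx.2⟩
      have h4 : (i.1.bag ∩ B).card + (i.1.bag \ B).card = i.1.bag.card :=
        Finset.card_inter_add_card_sdiff _ _
      have h5 : (i.1.bag \ B).card ≤ 1 := hnest i.1 i.2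
      have h6 : vs i.1 ∩ B ⊆ i.1.bag := hiii i.1 i.2
      have h7 : (vs i.1 ∩ B).card ≤ (i.1.bag ∩ B).card := by
        refine Finset.card_le_card ?_
        intro x hx
        have hx' := hx
        rw [Finset.mem_inter] at hx'
        rw [Finset.mem_inter]
        exact ⟨h6 hx, hx'.2⟩
      rcases max_cases i.1.bag.card 1 with ⟨hm, _⟩ | ⟨hm, _⟩ <;> omega

end Chop

section NicifyRestr
variable {G : SimpleGraph V} {k : ℕ}

mutual
  def Raw (G : SimpleGraph V) (k : ℕ) : RT V → Prop
    | .node B cs =>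
        B.card ≤ k + 1 ∧
        (∀ c ∈ cs, vs c ∩ B ⊆ c.bag) ∧
        List.Pairwise (fun c c' => vs c ∩ vs c' ⊆ B) cs ∧
        (∀ u v : V, G.Adj u v → u ∈ B ∪ vsL cs → v ∈ B ∪ vsL cs →
          (u ∈ B ∧ v ∈ B) ∨ ∃ c ∈ cs, u ∈ vs c ∧ v ∈ vs c) ∧
        RawL G k cs
  termination_by d => sizeOf d
  def RawL (G : SimpleGraph V) (k : ℕ) : List (RT V) → Prop
    | [] => True
    | c :: cs => Raw G k c ∧ RawL G k cs
  termination_by l => sizeOf l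
end

lemma rawL_iff {l : List (RT V)} : RawL G k l ↔ ∀ c ∈ l, Raw G k c := by
  induction l with
  | nil => simp [RawL]
  | cons c l ih => simp [RawL, ih]

lemma raw_node {B : Finset V} {cs : List (RT V)} :
    Raw G k (.node B cs) ↔
      (B.card ≤ k + 1 ∧
        (∀ c ∈ cs, vs c ∩ B ⊆ c.bag) ∧
        List.Pairwise (fun c c' => vs c ∩ vs c' ⊆ B) cs ∧
        (∀ u v : V, G.Adj u v → u ∈ B ∪ vsL cs → v ∈ B ∪ vsL cs →
          (u ∈ B ∧ v ∈ B) ∨ ∃ c ∈ cs, u ∈ vs c ∧ v ∈ vs c) ∧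
        ∀ c ∈ cs, Raw G k c) := by
  rw [show Raw G k (.node B cs) = _ from by rw [Raw]]
  rw [rawL_iff]

-- restriction of a decomposition to a subset
mutual
  noncomputable def restr : RT V → Finset V → RT V
    | .node B cs, C => .node (B ∩ C) (restrL cs C)
  termination_by d => sizeOf d
  noncomputable def restrL : List (RT V) → Finset V → List (RT V)
    | [], _ => []
    | c :: cs, C => restr c C :: restrL cs C
  termination_by l => sizeOf l
end

lemma restrL_eq (cs : List (RT V)) (C : Finset V) :
    restrL cs C = cs.map (fun c => restr c C) := by
  induction cs with
  | nil => rw [restrL]; simp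
  | cons c cs ih => rw [restrL]; simp [ih]

lemma restr_bag (d : RT V) (C : Finset V) : (restr d C).bag = d.bag ∩ C := by
  cases d with
  | node B cs => rw [restr]; rfl

lemma restr_vs (C : Finset V) : ∀ d : RT V, (restr d C).vs = d.vs ∩ C := by
  refine strong_ind ?_
  intro B cs IH
  rw [restr, vs_node, vs_node, restrL_eq]
  ext u
  simp only [Finset.mem_union, Finset.mem_inter, mem_vsL, List.mem_map]
  constructor
  · rintro (h | ⟨c', ⟨c, hc, rfl⟩, hu⟩)
    · exact ⟨Or.inl h.1, h.2⟩
    · rw [IH c hc] at hu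
      rw [Finset.mem_inter] at hu
      exact ⟨Or.inr ⟨c, hc, hu.1⟩, hu.2⟩
  · rintro ⟨h | ⟨c, hc, hu⟩, hC⟩
    · exact Or.inl ⟨h, hC⟩
    · refine Or.inr ⟨restr c C, ⟨c, hc, rfl⟩, ?_⟩
      rw [IH c hc, Finset.mem_inter]
      exact ⟨hu, hC⟩

lemma restr_good (C : Finset V) : ∀ d : RT V, Good G k d → Good G k (restr d C) := by
  refine strong_ind ?_
  intro B cs IH hgood
  rw [good_node] at hgood
  obtain ⟨hwidth, hiii, hpw, hnest, hedge, hkids⟩ := hgood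
  rw [restr, good_node]
  refine ⟨?_, ?_, ?_, ?_, ?_, ?_⟩
  · exact le_trans (Finset.card_le_card Finset.inter_subset_left) hwidth
  · intro c' hc'
    rw [restrL_eq, List.mem_map] at hc'
    obtain ⟨c, hc, rfl⟩ := hc'
    rw [restr_vs, restr_bag]
    intro x hx
    simp only [Finset.mem_inter] at hx ⊢
    exact ⟨hiii c hc (Finset.mem_inter.mpr ⟨hx.1.1, hx.2.1⟩), hx.1.2⟩
  · rw [restrL_eq]
    refine List.Pairwise.map _ ?_ hpw
    intro a b hab
    rw [restr_vs, restr_vs]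
    intro x hx
    simp only [Finset.mem_inter] at hx ⊢
    exact ⟨hab (Finset.mem_inter.mpr ⟨hx.1.1, hx.2.1⟩), hx.1.2⟩
  · intro c' hc'
    rw [restrL_eq, List.mem_map] at hc'
    obtain ⟨c, hc, rfl⟩ := hc'
    rw [restr_bag]
    refine le_trans (Finset.card_le_card ?_) (hnest c hc)
    intro x hx
    rw [Finset.mem_sdiff, Finset.mem_inter] at hx
    rw [Finset.mem_sdiff]
    exact ⟨hx.1.1, fun hB => hx.2 (Finset.mem_inter.mpr ⟨hB, hx.1.2⟩)⟩
  · intro u v hadj hu hv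
    have hu' : u ∈ (restr (.node B cs) C).vs := by rw [restr, vs_node]; exact hu
    have hv' : v ∈ (restr (.node B cs) C).vs := by rw [restr, vs_node]; exact hv
    rw [restr_vs, vs_node, Finset.mem_inter] at hu' hv'
    rcases hedge u v hadj hu'.1 hv'.1 with ⟨h1, h2⟩ | ⟨c, hc, h1, h2⟩
    · exact Or.inl ⟨Finset.mem_inter.mpr ⟨h1, hu'.2⟩, Finset.mem_inter.mpr ⟨h2, hv'.2⟩⟩
    · refine Or.inr ⟨restr c C, ?_, ?_, ?_⟩
      · rw [restrL_eq, List.mem_map]; exact ⟨c, hc, rfl⟩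
      · rw [restr_vs, Finset.mem_inter]; exact ⟨h1, hu'.2⟩
      · rw [restr_vs, Finset.mem_inter]; exact ⟨h2, hv'.2⟩
  · intro c' hc'
    rw [restrL_eq, List.mem_map] at hc'
    obtain ⟨c, hc, rfl⟩ := hc'
    exact IH c hc (hkids c hc)

end NicifyRestr

section Nicify
variable {G : SimpleGraph V} {k : ℕ}

noncomputable def chain (B : Finset V) (cs : List (RT V)) : List V → RT V
  | [] => .node B cs
  | a :: l => .node (B \ insert a l.toFinset) [chain B cs l]

lemma chain_bag (B : Finset V) (cs : List (RT V)) (l : List V) :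
    (chain B cs l).bag = B \ l.toFinset := by
  cases l with
  | nil => rw [chain]; simp [bag]
  | cons a l => rw [chain]; simp [bag]

lemma chain_vs (B : Finset V) (cs : List (RT V)) (l : List V) :
    (chain B cs l).vs = B ∪ vsL cs := by
  induction l with
  | nil => rw [chain, vs_node]
  | cons a l ih =>
    rw [chain, vs_node]
    rw [show vsL [chain B cs l] = (chain B cs l).vs ∪ ∅ from by rw [vsL, vsL]]
    rw [Finset.union_empty, ih]
    rw [Finset.union_eq_right.mpr]
    intro x hx
    rw [Finset.mem_sdiff] at hx
    exact Finset.mem_union_left _ hx.1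

lemma chain_good (B : Finset V) (cs : List (RT V)) (hG : Good G k (.node B cs)) :
    ∀ l : List V, Good G k (chain B cs l) := by
  intro l
  induction l with
  | nil => rw [chain]; exact hG
  | cons a l ih =>
    have hwidth := ((good_node _ _).mp hG).1
    rw [chain, good_node]
    refine ⟨?_, ?_, ?_, ?_, ?_, ?_⟩
    · exact le_trans (Finset.card_le_card (Finset.sdiff_subset)) hwidth
    · intro c hc
      rw [List.mem_singleton] at hc
      subst hc
      rw [chain_bag]
      intro x hx
      rw [Finset.mem_inter, Finset.mem_sdiff, Finset.mem_insert] at hx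
      rw [Finset.mem_sdiff, List.mem_toFinset]
      refine ⟨hx.2.1, fun hl => hx.2.2 (Or.inr (List.mem_toFinset.mpr hl))⟩
    · simp
    · intro c hc
      rw [List.mem_singleton] at hc
      subst hc
      rw [chain_bag]
      refine le_trans (Finset.card_le_card (?_ : _ ⊆ ({a} : Finset V))) (by simp)
      intro x hx
      rw [Finset.mem_sdiff, Finset.mem_sdiff, List.mem_toFinset, Finset.mem_sdiff] at hx
      rw [Finset.mem_singleton]
      by_contra hxa
      exact hx.2 ⟨hx.1.1, by
        rw [Finset.mem_insert, List.mem_toFinset]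
        rintro (rfl | h)
        · exact hxa rfl
        · exact hx.1.2 h⟩
    · intro u v hadj hu hv
      refine Or.inr ⟨chain B cs l, List.mem_singleton_self _, ?_, ?_⟩
      · rw [chain_vs]
        have : u ∈ (B \ insert a l.toFinset) ∪ vsL [chain B cs l] := hu
        rcases Finset.mem_union.mp this with h | h
        · exact Finset.mem_union_left _ (Finset.mem_sdiff.mp h).1
        · obtain ⟨c, hc, hc2⟩ := mem_vsL.mp h
          rw [List.mem_singleton] at hc
          subst hc
          rw [chain_vs] at hc2
          exact hc2
      · rw [chain_vs]
        rcases Finset.mem_union.mp hv with h | h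
        · exact Finset.mem_union_left _ (Finset.mem_sdiff.mp h).1
        · obtain ⟨c, hc, hc2⟩ := mem_vsL.mp h
          rw [List.mem_singleton] at hc
          subst hc
          rw [chain_vs] at hc2
          exact hc2
    · intro c hc
      rw [List.mem_singleton] at hc
      subst hc
      exact ih

mutual
  noncomputable def nicify : Finset V → RT V → RT V
    | P, .node B cs => chain B (nicifyL B cs) (B \ P).toList
  termination_by _ d => sizeOf d
  noncomputable def nicifyL : Finset V → List (RT V) → List (RT V)
    | _, [] => []
    | P, c :: cs => nicify P c :: nicifyL P cs
  termination_by _ l => sizeOf l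
end

lemma nicifyL_eq (P : Finset V) (cs : List (RT V)) :
    nicifyL P cs = cs.map (fun c => nicify P c) := by
  induction cs with
  | nil => rw [nicifyL]; simp
  | cons c cs ih => rw [nicifyL]; simp [ih]

lemma nicify_ok : ∀ d : RT V, Raw G k d → ∀ P : Finset V, vs d ∩ P ⊆ d.bag →
    Good G k (nicify P d) ∧ (nicify P d).vs = d.vs ∧ (nicify P d).bag = d.bag ∩ P := by
  refine strong_ind ?_
  intro B cs IH hraw P hP
  rw [raw_node] at hraw
  obtain ⟨hwidth, hiii, hpw, hedge, hkids⟩ := hraw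
  have hbagd : (RT.node B cs).bag = B := rfl
  rw [hbagd] at hP
  -- children info
  have hchild : ∀ c ∈ cs, Good G k (nicify B c) ∧ (nicify B c).vs = vs c ∧
      (nicify B c).bag = c.bag ∩ B := by
    intro c hc
    exact IH c hc (hkids c hc) B (hiii c hc)
  have hvsL : vsL (nicifyL B cs) = vsL cs := by
    ext u
    rw [mem_vsL, mem_vsL, nicifyL_eq]
    constructor
    · rintro ⟨c', hc', hu⟩
      obtain ⟨c, hc, rfl⟩ := List.mem_map.mp hc'
      exact ⟨c, hc, by rw [← (hchild c hc).2.1]; exact hu⟩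
    · rintro ⟨c, hc, hu⟩
      exact ⟨nicify B c, List.mem_map.mpr ⟨c, hc, rfl⟩, by rw [(hchild c hc).2.1]; exact hu⟩
  have hmid : Good G k (RT.node B (nicifyL B cs)) := by
    rw [good_node]
    refine ⟨hwidth, ?_, ?_, ?_, ?_, ?_⟩
    · intro c' hc'
      rw [nicifyL_eq, List.mem_map] at hc'
      obtain ⟨c, hc, rfl⟩ := hc'
      rw [(hchild c hc).2.1, (hchild c hc).2.2]
      intro x hx
      rw [Finset.mem_inter]
      exact ⟨hiii c hc hx, (Finset.mem_inter.mp hx).2⟩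
    · have hpw' : cs.Pairwise (fun a b => vs (nicify B a) ∩ vs (nicify B b) ⊆ B) := by
        refine hpw.imp_of_mem ?_
        intro a b ha hb hab
        rw [(hchild a ha).2.1, (hchild b hb).2.1]
        exact hab
      rw [nicifyL_eq]
      exact List.Pairwise.map _ (fun a b h => h) hpw'
    · intro c' hc'
      rw [nicifyL_eq, List.mem_map] at hc'
      obtain ⟨c, hc, rfl⟩ := hc'
      rw [(hchild c hc).2.2]
      have : (c.bag ∩ B) \ B = ∅ := by
        ext x; simp only [Finset.mem_sdiff, Finset.mem_inter, Finset.notMem_empty]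
        tauto
      rw [this]
      simp
    · intro u v hadj hu hv
      rw [hvsL] at hu hv
      rcases hedge u v hadj hu hv with h | ⟨c, hc, h1, h2⟩
      · exact Or.inl h
      · exact Or.inr ⟨nicify B c, by rw [nicifyL_eq]; exact List.mem_map.mpr ⟨c, hc, rfl⟩,
          by rw [(hchild c hc).2.1]; exact h1, by rw [(hchild c hc).2.1]; exact h2⟩
    · intro c' hc'
      rw [nicifyL_eq, List.mem_map] at hc'
      obtain ⟨c, hc, rfl⟩ := hc'
      exact (hchild c hc).1
  refine ⟨?_, ?_, ?_⟩
  · rw [nicify]; exact chain_good _ _ hmid _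
  · rw [nicify, chain_vs, hvsL, vs_node]
  · rw [nicify, chain_bag, Finset.toList_toFinset, Finset.sdiff_sdiff_self_left, hbagd]

end Nicify

section Rec
variable [Finite V] {G : SimpleGraph V} {k q : ℕ}

lemma small_sol (G : SimpleGraph V) (q : ℕ) (W : Finset V) :
    ∃ S : Finset V, S ⊆ W ∧ S.card = W.card - min W.card q ∧
      ∀ c : (G.induce ((W \ S : Finset V) : Set V)).ConnectedComponent,
        Nat.card c.supp ≤ q := by
  obtain ⟨T, hT, hTcard⟩ := Finset.exists_subset_card_eq (min_le_left W.card q)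
  have hWS : W \ (W \ T) = T := by
    rw [Finset.sdiff_sdiff_self_left]
    exact Finset.inter_eq_right.mpr hT
  refine ⟨W \ T, Finset.sdiff_subset, ?_, ?_⟩
  · rw [Finset.card_sdiff_of_subset hT, hTcard]
  · rw [hWS]
    intro c
    refine (comp_card_le c T ?_).trans ?_
    · intro x _
      have := x.2
      rwa [Finset.mem_coe] at this
    · rw [hTcard]; exact min_le_right _ _

lemma step (hq : 0 < q) {d : RT V} (hgood : Good G k d) (hbag : d.bag = ∅)
    (hbig : q + 1 ≤ d.vs.card) :
    ∃ X C : Finset V, C ⊆ d.vs ∧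
      Good G k (restr d C) ∧ (restr d C).vs = C ∧ (restr d C).bag = ∅ ∧
      X.card ≤ k + 1 ∧ C.card + q + max X.card 1 ≤ d.vs.card ∧
      ∀ SC : Finset V, SC ⊆ C →
        (∀ c : (G.induce ((C \ SC : Finset V) : Set V)).ConnectedComponent,
          Nat.card c.supp ≤ q) →
        (X ∪ SC) ⊆ d.vs ∧ (X ∪ SC).card ≤ X.card + SC.card ∧
        ∀ c : (G.induce ((d.vs \ (X ∪ SC) : Finset V) : Set V)).ConnectedComponent,
          Nat.card c.supp ≤ q := by
  have hmass : q + max d.bag.card 1 ≤ d.vs.card := by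
    have hmax : max d.bag.card 1 = 1 := by rw [hbag]; simp
    omega
  obtain ⟨X, A, h1, h2, h3, h4, h5, h6, h7, h8⟩ := chop d hgood hmass
  set C : Finset V := (d.vs \ X) \ A with hC
  have hmemC : ∀ x, x ∈ C ↔ x ∈ d.vs ∧ x ∉ X ∧ x ∉ A := by
    intro x
    rw [hC, Finset.mem_sdiff, Finset.mem_sdiff]
    tauto
  have hCd : C ⊆ d.vs := fun x hx => ((hmemC x).mp hx).1
  have hAsub : A ⊆ d.vs \ X := by
    intro x hx
    rw [Finset.mem_sdiff]
    exact ⟨h2 hx, fun hX => h3 x hX hx⟩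
  have hCcard : C.card + A.card + X.card = d.vs.card := by
    have h1' := Finset.card_le_card h1
    have h2' := Finset.card_le_card hAsub
    rw [Finset.card_sdiff_of_subset h1] at h2'
    rw [hC, Finset.card_sdiff_of_subset hAsub, Finset.card_sdiff_of_subset h1]
    omega
  refine ⟨X, C, hCd, restr_good C d hgood, ?_, ?_, h5, by omega, ?_⟩
  · rw [restr_vs]; exact Finset.inter_eq_right.mpr hCd
  · rw [restr_bag, hbag]; exact Finset.empty_inter _
  · intro SC hSC hcomps
    refine ⟨Finset.union_subset h1 (hSC.trans hCd), Finset.card_union_le _ _, ?_⟩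
    have hset : d.vs \ (X ∪ SC) = A ∪ (C \ SC) := by
      ext x
      simp only [Finset.mem_sdiff, Finset.mem_union]
      have hxA1 : x ∈ A → x ∈ d.vs := fun h => h2 h
      have hxA2 : x ∈ A → x ∉ X := fun hA hX => h3 x hX hA
      have hxA3 : x ∈ A → x ∉ SC := fun hA hS => ((hmemC x).mp (hSC hS)).2.2 hA
      have hxC := hmemC x
      tauto
    rw [hset]
    refine split_comps ?_ ?_ h8 hcomps
    · intro x hx hx2
      rw [Finset.mem_sdiff] at hx2
      exact ((hmemC x).mp hx2.1).2.2 hx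
    · intro u hu w hw
      rw [Finset.mem_sdiff] at hw
      have hw' := (hmemC w).mp hw.1
      exact h7 u hu w hw'.1 hw'.2.1 hw'.2.2

theorem rec_main (hq : 0 < q) :
    ∀ (r : ℕ) (d : RT V), Good G k d → d.bag = ∅ →
      d.vs.card + 1 ≤ (r + 1) * (q + 1) + q + k →
      ∃ S : Finset V, S ⊆ d.vs ∧ S.card ≤ (r + 1) * (k + 1) ∧
        ∀ c : (G.induce ((d.vs \ S : Finset V) : Set V)).ConnectedComponent,
          Nat.card c.supp ≤ q := by
  intro r
  induction r with
  | zero =>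
    intro d hgood hbag hN
    by_cases hsmall : d.vs.card ≤ q + k
    · obtain ⟨S, hS1, hS2, hS3⟩ := small_sol G q d.vs
      exact ⟨S, hS1, by omega, hS3⟩
    · have hbig : q + 1 ≤ d.vs.card := by omega
      obtain ⟨X, C, hCd, hgood', hvs', hbag', hXcard, hbudget, hfin⟩ :=
        step hq hgood hbag hbig
      obtain ⟨SC, hSC1, hSC2, hSC3⟩ := small_sol G q C
      obtain ⟨hsub, hcard, hcomps⟩ := hfin SC hSC1 hSC3
      refine ⟨X ∪ SC, hsub, ?_, hcomps⟩
      have h1 : (0 + 1) * (q + 1) + q + k = 2 * q + 1 + k := by ring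
      rw [h1] at hN
      rcases max_cases X.card 1 with ⟨hm, _⟩ | ⟨hm, _⟩ <;>
        rcases min_le_iff.mp (le_refl (min C.card q)) with _ | _ <;> omega
  | succ m ih =>
    intro d hgood hbag hN
    by_cases hsmall : d.vs.card ≤ q + k
    · obtain ⟨S, hS1, hS2, hS3⟩ := small_sol G q d.vs
      refine ⟨S, hS1, ?_, hS3⟩
      have : k + 1 ≤ (m + 1 + 1) * (k + 1) := Nat.le_mul_of_pos_left _ (by omega)
      omega
    · have hbig : q + 1 ≤ d.vs.card := by omega
      obtain ⟨X, C, hCd, hgood', hvs', hbag', hXcard, hbudget, hfin⟩ :=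
        step hq hgood hbag hbig
      have hCN : C.card + 1 ≤ (m + 1) * (q + 1) + q + k := by
        have hexp : (m + 1 + 1) * (q + 1) = (m + 1) * (q + 1) + (q + 1) := by ring
        rcases max_cases X.card 1 with ⟨hm, _⟩ | ⟨hm, _⟩ <;> omega
      obtain ⟨SC, hSC1, hSC2, hSC3⟩ := ih (restr d C) hgood' hbag'
        (by rw [hvs']; exact hCN)
      rw [hvs'] at hSC1 hSC3
      obtain ⟨hsub, hcard, hcomps⟩ := hfin SC hSC1 hSC3
      refine ⟨X ∪ SC, hsub, ?_, hcomps⟩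
      have hexp : (m + 1 + 1) * (k + 1) = (m + 1) * (k + 1) + (k + 1) := by ring
      omega

end Rec

end RT

section TreeTool
variable {T : Type} {TG : SimpleGraph T}

noncomputable def pth (ht : TG.IsTree) (a b : T) : TG.Walk a b :=
  (ht.existsUnique_path a b).choose

lemma pth_isPath (ht : TG.IsTree) (a b : T) : (pth ht a b).IsPath :=
  (ht.existsUnique_path a b).choose_spec.1

lemma path_unique (ht : TG.IsTree) {a b : T} (p : TG.Walk a b) (hp : p.IsPath) :
    p = pth ht a b :=
  (ht.existsUnique_path a b).choose_spec.2 p hp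

lemma pth_reverse (ht : TG.IsTree) (a b : T) : (pth ht a b).reverse = pth ht b a :=
  path_unique ht _ (pth_isPath ht a b).reverse

lemma mem_pth_symm (ht : TG.IsTree) {a b x : T} (h : x ∈ (pth ht a b).support) :
    x ∈ (pth ht b a).support := by
  rw [← pth_reverse, SimpleGraph.Walk.support_reverse, List.mem_reverse]
  exact h

lemma pth_tri (ht : TG.IsTree) {a c : T} (b : T) {x : T} (h : x ∈ (pth ht a c).support) :
    x ∈ (pth ht a b).support ∨ x ∈ (pth ht b c).support := by
  have heq : pth ht a c = ((pth ht a b).append (pth ht b c)).bypass :=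
    (path_unique ht _ (SimpleGraph.Walk.bypass_isPath _)).symm
  rw [heq] at h
  have h2 := SimpleGraph.Walk.support_bypass_subset _ h
  rwa [SimpleGraph.Walk.mem_support_append_iff] at h2

lemma pth_prefix (ht : TG.IsTree) {x y z : T} (h : z ∈ (pth ht x y).support) :
    ∀ w ∈ (pth ht x z).support, w ∈ (pth ht x y).support := by
  have heq : pth ht x z = (pth ht x y).takeUntil z h :=
    (path_unique ht _ ((pth_isPath ht x y).takeUntil h)).symm
  intro w hw
  rw [heq] at hw
  exact SimpleGraph.Walk.support_takeUntil_subset _ h hw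

/-- `x` is on the `s`-side of the tree edge `r-s`. -/
def onSide (ht : TG.IsTree) (r s x : T) : Prop := r ∉ (pth ht s x).support

lemma side_self (ht : TG.IsTree) {r s : T} (hadj : TG.Adj r s) : onSide ht r s s := by
  intro hmem
  have : SimpleGraph.Walk.nil = pth ht s s := path_unique ht _ (by simp)
  rw [← this] at hmem
  simp at hmem
  exact hadj.ne hmem

lemma side_ne (ht : TG.IsTree) {r s x : T} (hs : onSide ht r s x) : x ≠ r := by
  intro h
  exact hs (h ▸ SimpleGraph.Walk.end_mem_support _)

lemma side_char (ht : TG.IsTree) {r s x : T} (hadj : TG.Adj r s) (hs : onSide ht r s x) :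
    pth ht r x = SimpleGraph.Walk.cons hadj (pth ht s x) := by
  refine (path_unique ht _ ?_).symm
  rw [SimpleGraph.Walk.cons_isPath_iff]
  exact ⟨pth_isPath ht s x, hs⟩

lemma side_mem_path (ht : TG.IsTree) {r s x : T} (hadj : TG.Adj r s) (hs : onSide ht r s x) :
    s ∈ (pth ht r x).support := by
  rw [side_char ht hadj hs, SimpleGraph.Walk.support_cons]
  exact List.mem_cons_of_mem _ (SimpleGraph.Walk.start_mem_support _)

lemma side_unique (ht : TG.IsTree) {r s s' x : T} (hadj : TG.Adj r s) (hadj' : TG.Adj r s')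
    (hs : onSide ht r s x) (hs' : onSide ht r s' x) : s = s' := by
  have h1 := side_char ht hadj hs
  have h2 := side_char ht hadj' hs'
  have h3 := congrArg SimpleGraph.Walk.support (h1.symm.trans h2)
  rw [SimpleGraph.Walk.support_cons, SimpleGraph.Walk.support_cons,
    SimpleGraph.Walk.support_eq_cons (pth ht s x),
    SimpleGraph.Walk.support_eq_cons (pth ht s' x)] at h3
  rw [List.cons_eq_cons] at h3
  have h5 := h3.2
  rw [List.cons_eq_cons] at h5
  exact h5.1

lemma side_exists (ht : TG.IsTree) {r x : T} (hne : x ≠ r) :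
    ∃ s, TG.Adj r s ∧ onSide ht r s x := by
  obtain ⟨s, hadj, q, hq⟩ := SimpleGraph.Walk.exists_eq_cons_of_ne (Ne.symm hne) (pth ht r x)
  have hp := pth_isPath ht r x
  rw [hq, SimpleGraph.Walk.cons_isPath_iff] at hp
  have hq2 : q = pth ht s x := path_unique ht q hp.1
  refine ⟨s, hadj, ?_⟩
  intro hm
  rw [← hq2] at hm
  exact hp.2 hm

lemma side_closed (ht : TG.IsTree) {r s x y z : T}
    (hx : onSide ht r s x) (hy : onSide ht r s y) (hz : z ∈ (pth ht x y).support) :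
    onSide ht r s z := by
  have hxy : r ∉ (pth ht x y).support := by
    intro hr
    rcases pth_tri ht s hr with h | h
    · exact hx (mem_pth_symm ht h)
    · exact hy h
  intro hr
  rcases pth_tri ht x hr with h | h
  · exact hx h
  · exact hxy (pth_prefix ht hz r h)

lemma side_gateway (ht : TG.IsTree) {r s x w : T} (hadj : TG.Adj r s)
    (hx : onSide ht r s x) (hw : ¬ onSide ht r s w) :
    s ∈ (pth ht x w).support := by
  by_cases hr : r ∈ (pth ht x w).support
  · exact pth_prefix ht hr s (mem_pth_symm ht (side_mem_path ht hadj hx))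
  · exfalso
    refine hw ?_
    intro hmem
    rcases pth_tri ht x hmem with h | h
    · exact hx h
    · exact hr h

lemma side_diff (ht : TG.IsTree) {r s s' x y : T} (hadj : TG.Adj r s) (hadj' : TG.Adj r s')
    (hne : s ≠ s') (hx : onSide ht r s x) (hy : onSide ht r s' y) :
    r ∈ (pth ht x y).support := by
  by_contra hr
  refine hne (side_unique ht hadj hadj' ?_ hy)
  intro hmem
  rcases pth_tri ht x hmem with h | h
  · exact hx h
  · exact hr h

lemma connected_path_closed (ht : TG.IsTree) {W : Set T}
    (hconn : (TG.induce W).Connected) {x y : T} (hx : x ∈ W) (hy : y ∈ W) :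
    ∀ z ∈ (pth ht x y).support, z ∈ W := by
  obtain ⟨w⟩ := hconn.preconnected ⟨x, hx⟩ ⟨y, hy⟩
  have hw : ∀ z ∈ (w.map (SimpleGraph.Embedding.induce W).toHom).support, z ∈ W := by
    intro z hz
    rw [SimpleGraph.Walk.support_map, List.mem_map] at hz
    obtain ⟨z', _, rfl⟩ := hz
    exact z'.2
  have heq : pth ht x y = (w.map (SimpleGraph.Embedding.induce W).toHom).bypass :=
    (path_unique ht _ (SimpleGraph.Walk.bypass_isPath _)).symm
  intro z hz
  rw [heq] at hz
  exact hw z (SimpleGraph.Walk.support_bypass_subset _ hz)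

end TreeTool

section Build
open RT
variable {V : Type} [Fintype V] {T : Type} {TG : SimpleGraph T}

noncomputable def bagF (B : T → Set V) (t : T) : Finset V :=
  (Set.toFinite (B t)).toFinset

lemma mem_bagF {B : T → Set V} {t : T} {v : V} : v ∈ bagF B t ↔ v ∈ B t :=
  Set.Finite.mem_toFinset _

def pathClosed (ht : TG.IsTree) (W : Finset T) : Prop :=
  ∀ x ∈ W, ∀ y ∈ W, ∀ z ∈ (pth ht x y).support, z ∈ W

def edgeCov (G : SimpleGraph V) (B : T → Set V) (W : Finset T) : Prop :=
  ∀ u v : V, G.Adj u v → (∃ x ∈ W, u ∈ B x) → (∃ y ∈ W, v ∈ B y) →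
    ∃ w ∈ W, u ∈ B w ∧ v ∈ B w

noncomputable def build (ht : TG.IsTree) (B : T → Set V) (W : Finset T) (r : T) : RT V :=
  if hr : r ∈ W then
    RT.node (bagF B r)
      ((((W.filter (fun s => TG.Adj r s)).toList).attach).map
        (fun s => build ht B (W.filter (fun x => onSide ht r s.1 x)) s.1))
  else RT.node ∅ []
termination_by W.card
decreasing_by
  refine Finset.card_lt_card ⟨Finset.filter_subset _ _, fun hsub => ?_⟩
  have hmem := hsub hr
  rw [Finset.mem_filter] at hmem
  exact side_ne ht hmem.2 rfl

lemma branch_facts (ht : TG.IsTree) {W : Finset T} {r s : T} (hr : r ∈ W)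
    (hpc : pathClosed ht W) (hsW : s ∈ W) (hadj : TG.Adj r s) :
    s ∈ W.filter (fun x => onSide ht r s x) ∧
    W.filter (fun x => onSide ht r s x) ⊆ W ∧
    pathClosed ht (W.filter (fun x => onSide ht r s x)) ∧
    (W.filter (fun x => onSide ht r s x)).card < W.card := by
  refine ⟨Finset.mem_filter.mpr ⟨hsW, side_self ht hadj⟩, Finset.filter_subset _ _, ?_, ?_⟩
  · intro x hx y hy z hz
    rw [Finset.mem_filter] at hx hy ⊢
    exact ⟨hpc x hx.1 y hy.1 z hz, side_closed ht hx.2 hy.2 hz⟩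
  · refine Finset.card_lt_card ⟨Finset.filter_subset _ _, fun hsub => ?_⟩
    have hmem := hsub hr
    rw [Finset.mem_filter] at hmem
    exact side_ne ht hmem.2 rfl

lemma mem_children_iff (ht : TG.IsTree) (B : T → Set V) {W : Finset T} {r : T} {c : RT V} :
    (c ∈ (((W.filter (fun s => TG.Adj r s)).toList).attach).map
        (fun s => build ht B (W.filter (fun x => onSide ht r s.1 x)) s.1)) ↔
      ∃ s, (s ∈ W ∧ TG.Adj r s) ∧ c = build ht B (W.filter (fun x => onSide ht r s x)) s := by
  rw [List.mem_map]
  constructor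
  · rintro ⟨s, _, rfl⟩
    have hs := s.2
    rw [Finset.mem_toList, Finset.mem_filter] at hs
    exact ⟨s.1, hs, rfl⟩
  · rintro ⟨s, hs, rfl⟩
    have hmem : s ∈ (W.filter (fun s => TG.Adj r s)).toList := by
      rw [Finset.mem_toList, Finset.mem_filter]; exact hs
    exact ⟨⟨s, hmem⟩, List.mem_attach _ _, rfl⟩

lemma build_vs (ht : TG.IsTree) (B : T → Set V) :
    ∀ (n : ℕ) (W : Finset T) (r : T), W.card ≤ n → r ∈ W → pathClosed ht W →
      (build ht B W r).vs = W.biUnion (bagF B) := by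
  intro n
  induction n with
  | zero =>
    intro W r hW hr _
    exfalso
    have := Finset.card_pos.mpr ⟨r, hr⟩
    omega
  | succ n ih =>
    intro W r hW hr hpc
    rw [build, dif_pos hr, vs_node]
    ext u
    rw [Finset.mem_union, mem_vsL, Finset.mem_biUnion]
    constructor
    · rintro (h | ⟨c, hc, hu⟩)
      · exact ⟨r, hr, h⟩
      · obtain ⟨s, hs, rfl⟩ := (mem_children_iff ht B).mp hc
        obtain ⟨hs1, hs2, hs3, hs4⟩ := branch_facts ht hr hpc hs.1 hs.2
        rw [ih _ s (by omega) hs1 hs3, Finset.mem_biUnion] at hu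
        obtain ⟨x, hx, hux⟩ := hu
        exact ⟨x, hs2 hx, hux⟩
    · rintro ⟨x, hx, hux⟩
      by_cases hxr : x = r
      · subst hxr; exact Or.inl hux
      · obtain ⟨s, hadj, hside⟩ := side_exists ht hxr
        have hsW : s ∈ W := hpc r hr x hx s (side_mem_path ht hadj hside)
        obtain ⟨hs1, hs2, hs3, hs4⟩ := branch_facts ht hr hpc hsW hadj
        refine Or.inr ⟨build ht B (W.filter (fun z => onSide ht r s z)) s,
          (mem_children_iff ht B).mpr ⟨s, ⟨hsW, hadj⟩, rfl⟩, ?_⟩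
        rw [ih _ s (by omega) hs1 hs3, Finset.mem_biUnion]
        exact ⟨x, Finset.mem_filter.mpr ⟨hx, hside⟩, hux⟩

lemma build_raw {G : SimpleGraph V} {k : ℕ} (ht : TG.IsTree) (B : T → Set V)
    (hsupp : ∀ v : V, (TG.induce {t | v ∈ B t}).Connected)
    (hwidth : ∀ t : T, (bagF B t).card ≤ k + 1) :
    ∀ (n : ℕ) (W : Finset T) (r : T), W.card ≤ n → r ∈ W → pathClosed ht W →
      edgeCov G B W → Raw G k (build ht B W r) := by
  intro n
  induction n with
  | zero =>
    intro W r hW hr _ _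
    exfalso
    have := Finset.card_pos.mpr ⟨r, hr⟩
    omega
  | succ n ih =>
    intro W r hW hr hpc hec
    have hL1 : ∀ (v : V) (x y : T), v ∈ B x → v ∈ B y →
        ∀ z ∈ (pth ht x y).support, v ∈ B z := by
      intro v x y hx hy z hz
      exact connected_path_closed ht (hsupp v) hx hy z hz
    rw [build, dif_pos hr, raw_node]
    have hchildvs : ∀ s, s ∈ W → TG.Adj r s →
        (build ht B (W.filter (fun x => onSide ht r s x)) s).vs =
          (W.filter (fun x => onSide ht r s x)).biUnion (bagF B) := by
      intro s hsW hadj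
      obtain ⟨hs1, hs2, hs3, hs4⟩ := branch_facts ht hr hpc hsW hadj
      exact build_vs ht B n _ s (by omega) hs1 hs3
    refine ⟨hwidth r, ?_, ?_, ?_, ?_⟩
    · -- (iii) : vs c ∩ bag ⊆ bag c
      intro c hc
      obtain ⟨s, hs, rfl⟩ := (mem_children_iff ht B).mp hc
      rw [hchildvs s hs.1 hs.2]
      intro v hv
      rw [Finset.mem_inter, Finset.mem_biUnion] at hv
      obtain ⟨⟨x, hx, hvx⟩, hvr⟩ := hv
      rw [Finset.mem_filter] at hx
      have hbag : (build ht B (W.filter (fun x => onSide ht r s x)) s).bag = bagF B s := by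
        rw [build, dif_pos (Finset.mem_filter.mpr ⟨hs.1, side_self ht hs.2⟩)]
        rfl
      rw [hbag, mem_bagF]
      rw [mem_bagF] at hvx hvr
      exact hL1 v r x hvr hvx s (side_mem_path ht hs.2 hx.2)
    · -- pairwise
      have hnodup : (W.filter (fun s => TG.Adj r s)).toList.Nodup := Finset.nodup_toList _
      have hpair : ∀ a b : {x // x ∈ (W.filter (fun s => TG.Adj r s)).toList}, a ≠ b →
          (build ht B (W.filter (fun x => onSide ht r a.1 x)) a.1).vs ∩
            (build ht B (W.filter (fun x => onSide ht r b.1 x)) b.1).vs ⊆ bagF B r := by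
        intro a b hab
        have ha := a.2; have hb := b.2
        rw [Finset.mem_toList, Finset.mem_filter] at ha hb
        have hne : a.1 ≠ b.1 := fun h => hab (Subtype.ext h)
        rw [hchildvs a.1 ha.1 ha.2, hchildvs b.1 hb.1 hb.2]
        intro v hv
        rw [Finset.mem_inter, Finset.mem_biUnion, Finset.mem_biUnion] at hv
        obtain ⟨⟨x, hx, hvx⟩, ⟨y, hy, hvy⟩⟩ := hv
        rw [Finset.mem_filter] at hx hy
        rw [mem_bagF] at hvx hvy
        rw [mem_bagF]
        exact hL1 v x y hvx hvy r (side_diff ht ha.2 hb.2 hne hx.2 hy.2)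
      rw [List.pairwise_map]
      exact List.Pairwise.imp (fun {a b} h => hpair a b h)
        ((List.nodup_attach.mpr hnodup : List.Pairwise (fun a b => a ≠ b) _))
    · -- edge condition
      intro u v hadj hu hv
      have hvs : bagF B r ∪ vsL ((((W.filter (fun s => TG.Adj r s)).toList).attach).map
          (fun s => build ht B (W.filter (fun x => onSide ht r s.1 x)) s.1)) =
          W.biUnion (bagF B) := by
        rw [← vs_node, ← build_vs ht B (n+1) W r hW hr hpc, build, dif_pos hr]
      rw [hvs, Finset.mem_biUnion] at hu hv
      obtain ⟨x, hx, hux⟩ := hu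
      obtain ⟨y, hy, hvy⟩ := hv
      rw [mem_bagF] at hux hvy
      obtain ⟨w, hwW, huw, hvw⟩ := hec u v hadj ⟨x, hx, hux⟩ ⟨y, hy, hvy⟩
      by_cases hwr : w = r
      · subst hwr
        exact Or.inl ⟨mem_bagF.mpr huw, mem_bagF.mpr hvw⟩
      · obtain ⟨s, hadjs, hside⟩ := side_exists ht hwr
        have hsW : s ∈ W := hpc r hr w hwW s (side_mem_path ht hadjs hside)
        refine Or.inr ⟨build ht B (W.filter (fun z => onSide ht r s z)) s,
          (mem_children_iff ht B).mpr ⟨s, ⟨hsW, hadjs⟩, rfl⟩, ?_, ?_⟩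
        · rw [hchildvs s hsW hadjs, Finset.mem_biUnion]
          exact ⟨w, Finset.mem_filter.mpr ⟨hwW, hside⟩, mem_bagF.mpr huw⟩
        · rw [hchildvs s hsW hadjs, Finset.mem_biUnion]
          exact ⟨w, Finset.mem_filter.mpr ⟨hwW, hside⟩, mem_bagF.mpr hvw⟩
    · -- children are raw
      intro c hc
      obtain ⟨s, hs, rfl⟩ := (mem_children_iff ht B).mp hc
      obtain ⟨hs1, hs2, hs3, hs4⟩ := branch_facts ht hr hpc hs.1 hs.2
      refine ih _ s (by omega) hs1 hs3 ?_
      -- edgeCov is preserved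
      intro u v huv hu hv
      obtain ⟨x, hx, hux⟩ := hu
      obtain ⟨y, hy, hvy⟩ := hv
      rw [Finset.mem_filter] at hx hy
      obtain ⟨w, hwW, huw, hvw⟩ := hec u v huv ⟨x, hx.1, hux⟩ ⟨y, hy.1, hvy⟩
      by_cases hws : onSide ht r s w
      · exact ⟨w, Finset.mem_filter.mpr ⟨hwW, hws⟩, huw, hvw⟩
      · refine ⟨s, hs1, ?_, ?_⟩
        · exact hL1 u x w hux huw s (side_gateway ht hs.2 hx.2 hws)
        · exact hL1 v y w hvy hvw s (side_gateway ht hs.2 hy.2 hws)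

end Build

section Extract
open RT
variable {V : Type} [Fintype V]

theorem extract {G : SimpleGraph V} {k : ℕ} (hV : Nonempty V)
    {T : Type} {TG : SimpleGraph T} {B : T → Set V}
    (ht : TG.IsTree) (hcov : ∀ v, ∃ t, v ∈ B t)
    (hecov : ∀ ⦃u v⦄, G.Adj u v → ∃ t, u ∈ B t ∧ v ∈ B t)
    (hsupp : ∀ v, (TG.induce {t | v ∈ B t}).Connected)
    (hw : ∀ t, Nat.card (B t) ≤ k + 1) :
    ∃ d : RT V, Raw G k d ∧ d.vs = Finset.univ := by
  choose tv htv using hcov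
  have hte : ∀ p : V × V, ∃ t, G.Adj p.1 p.2 → (p.1 ∈ B t ∧ p.2 ∈ B t) := by
    intro p
    by_cases h : G.Adj p.1 p.2
    · obtain ⟨t, h1, h2⟩ := hecov h
      exact ⟨t, fun _ => ⟨h1, h2⟩⟩
    · exact ⟨tv p.1, fun hadj => absurd hadj h⟩
  choose te hte using hte
  obtain ⟨v0⟩ := hV
  set ρ := tv v0 with hρ
  set F : Finset T := insert ρ (Finset.image tv Finset.univ ∪ Finset.image te Finset.univ)
    with hF
  set S : Finset T := F.biUnion (fun f => ((pth ht ρ f).support).toFinset) with hS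
  have hFS : ∀ f ∈ F, f ∈ S := by
    intro f hf
    rw [hS, Finset.mem_biUnion]
    exact ⟨f, hf, List.mem_toFinset.mpr (SimpleGraph.Walk.end_mem_support _)⟩
  have hρS : ρ ∈ S := hFS ρ (Finset.mem_insert_self _ _)
  have hprefS : ∀ x ∈ S, ∀ z ∈ (pth ht ρ x).support, z ∈ S := by
    intro x hx z hz
    rw [hS, Finset.mem_biUnion] at hx ⊢
    obtain ⟨f, hf, hxf⟩ := hx
    rw [List.mem_toFinset] at hxf
    exact ⟨f, hf, List.mem_toFinset.mpr (pth_prefix ht hxf z hz)⟩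
  have hpc : pathClosed ht S := by
    intro x hx y hy z hz
    rcases pth_tri ht ρ hz with h | h
    · exact hprefS x hx z (mem_pth_symm ht h)
    · exact hprefS y hy z h
  have hec : edgeCov G B S := by
    intro u v hadj _ _
    refine ⟨te (u, v), hFS _ ?_, hte (u, v) hadj⟩
    exact Finset.mem_insert_of_mem (Finset.mem_union_right _
      (Finset.mem_image_of_mem te (Finset.mem_univ (u, v))))
  have hwidth' : ∀ t : T, (bagF B t).card ≤ k + 1 := by
    intro t
    rw [bagF, ← Nat.card_eq_card_finite_toFinset]
    exact hw t
  refine ⟨build ht B S ρ, build_raw ht B hsupp hwidth' S.card S ρ le_rfl hρS hpc hec, ?_⟩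
  rw [build_vs ht B S.card S ρ le_rfl hρS hpc, Finset.eq_univ_iff_forall]
  intro v
  rw [Finset.mem_biUnion]
  exact ⟨tv v, hFS _ (Finset.mem_insert_of_mem (Finset.mem_union_left _
    (Finset.mem_image_of_mem tv (Finset.mem_univ v)))), mem_bagF.mpr (htv v)⟩

end Extract

end TWaux


/-- The strong product of two simple graphs. -/
def StrongProd {V W : Type*} (G : SimpleGraph V) (H : SimpleGraph W) : SimpleGraph (V × W) where
  Adj a b := a ≠ b ∧ (a.1 = b.1 ∨ G.Adj a.1 b.1) ∧ (a.2 = b.2 ∨ H.Adj a.2 b.2)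
  symm := ⟨by
    rintro a b ⟨hne, h1, h2⟩
    exact ⟨hne.symm, h1.imp Eq.symm (fun h => h.symm), h2.imp Eq.symm (fun h => h.symm)⟩⟩
  loopless := ⟨by rintro a ⟨hne, _⟩; exact hne rfl⟩

/-- `G` is isomorphic to a subgraph of `H`. -/
def ContainedIn {V W : Type*} (G : SimpleGraph V) (H : SimpleGraph W) : Prop :=
  ∃ f : V → W, Function.Injective f ∧ ∀ ⦃u v⦄, G.Adj u v → H.Adj (f u) (f v)

/-- Every connected component of `G - S` has at most `q` vertices. -/
def CompsLE {V : Type*} (G : SimpleGraph V) (S : Set V) (q : ℕ) : Prop :=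
  ∀ c : (G.induce Sᶜ).ConnectedComponent, Nat.card c.supp ≤ q

/-- Every connected component of `G - S` has at most `q` vertices (real bound). -/
def CompsLER {V : Type*} (G : SimpleGraph V) (S : Set V) (q : ℝ) : Prop :=
  ∀ c : (G.induce Sᶜ).ConnectedComponent, (Nat.card c.supp : ℝ) ≤ q

/-- `(TG, B)` is a tree-decomposition of `G`: `TG` is a tree, every vertex and
every edge of `G` lies in some bag, and for each vertex the set of nodes whose
bag contains it induces a nonempty connected subgraph of `TG`. -/
def IsTreeDecomp {V T : Type*} (G : SimpleGraph V) (TG : SimpleGraph T) (B : T → Set V) : Prop :=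
  TG.IsTree ∧
  (∀ v, ∃ t, v ∈ B t) ∧
  (∀ ⦃u v⦄, G.Adj u v → ∃ t, u ∈ B t ∧ v ∈ B t) ∧
  (∀ v, (TG.induce {t | v ∈ B t}).Connected)

/-- The tree-width of `G` is at most `k`. -/
def twLE {V : Type*} (G : SimpleGraph V) (k : ℕ) : Prop :=
  ∃ (T : Type) (TG : SimpleGraph T) (B : T → Set V),
    IsTreeDecomp G TG B ∧ ∀ t, Nat.card (B t) ≤ k + 1

/-- A path-decomposition of `G` with `t` bags. -/
def IsPathDecomp {V : Type*} (G : SimpleGraph V) (t : ℕ) (B : Fin t → Set V) : Prop :=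
  (∀ v, ∃ i, v ∈ B i) ∧
  (∀ ⦃u v⦄, G.Adj u v → ∃ i, u ∈ B i ∧ v ∈ B i) ∧
  (∀ i j l : Fin t, i ≤ j → j ≤ l → B i ∩ B l ⊆ B j)

/-- The path-width of `G` is at most `k`. -/
def pwLE {V : Type*} (G : SimpleGraph V) (k : ℕ) : Prop :=
  ∃ (t : ℕ) (B : Fin t → Set V), IsPathDecomp G t B ∧ ∀ i, Nat.card (B i) ≤ k + 1

/-- The tree-depth of `G` is at most `d`: there is a strict forest order (the
strict ancestor relation of a rooted forest) whose comparability graph contains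
`G`, with all chains of at most `d` vertices. -/
def tdLE {V : Type*} (G : SimpleGraph V) (d : ℕ) : Prop :=
  ∃ lt : V → V → Prop,
    Transitive lt ∧
    (∀ u v w, lt u w → lt v w → lt u v ∨ lt v u ∨ u = v) ∧
    (∀ ⦃u v⦄, G.Adj u v → lt u v ∨ lt v u) ∧
    ∃ f : V → Fin d, ∀ u v, lt u v → f u < f v

/-- `P` is an `H`-partition of `G`: the parts partition `V(G)` and every edge of
`G` lies within a part or between parts indexed by adjacent vertices of `H`. -/
def IsHPartition {V W : Type*} (G : SimpleGraph V) (H : SimpleGraph W) (P : W → Set V) : Prop :=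
  (∀ v, ∃! x, v ∈ P x) ∧
  ∀ ⦃u v⦄, G.Adj u v → ∀ ⦃x y⦄, u ∈ P x → v ∈ P y → x = y ∨ H.Adj x y

/-- The tree-partition-width of `G` is at most `m`. -/
def tpwLE {V : Type*} (G : SimpleGraph V) (m : ℕ) : Prop :=
  ∃ (T : Type) (TG : SimpleGraph T) (P : T → Set V),
    TG.IsTree ∧ IsHPartition G TG P ∧ ∀ x, Nat.card (P x) ≤ m

/-- The star with centre `none` and leaves `some i`, `i : ι`. -/
def starGraph (ι : Type*) : SimpleGraph (Option ι) where
  Adj a b := a ≠ b ∧ (a = none ∨ b = none)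
  symm := ⟨by rintro a b ⟨hne, h⟩; exact ⟨hne.symm, h.symm⟩⟩
  loopless := ⟨by rintro a ⟨hne, _⟩; exact hne rfl⟩

/-- A graph class is hereditary if it is closed under induced subgraphs. -/
def Hereditary (𝒢 : ∀ V : Type, SimpleGraph V → Prop) : Prop :=
  ∀ (V : Type) (G : SimpleGraph V), 𝒢 V G → ∀ S : Set V, 𝒢 S (G.induce S)

/-- Every `n`-vertex graph of the class has a balanced separator of size at most
`c * n ^ (1 - ε)`. -/
def SepBound (𝒢 : ∀ V : Type, SimpleGraph V → Prop) (c ε : ℝ) : Prop :=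
  ∀ (V : Type) [Fintype V] (G : SimpleGraph V), 𝒢 V G →
    ∃ S : Finset V, (S.card : ℝ) ≤ c * (Fintype.card V : ℝ) ^ (1 - ε) ∧
      CompsLER G ↑S ((Fintype.card V : ℝ) / 2)

/-- The `k`-th power of the `n`-vertex path. -/
def pathPow (n k : ℕ) : SimpleGraph (Fin n) where
  Adj i j := i ≠ j ∧ (i.val : ℤ) - j.val ≤ k ∧ (j.val : ℤ) - i.val ≤ k
  symm := ⟨by rintro i j ⟨hne, h1, h2⟩; exact ⟨hne.symm, h2, h1⟩⟩
  loopless := ⟨by rintro i ⟨hne, _⟩; exact hne rfl⟩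

theorem treewidth_separator (p q k n : ℕ) (hp : 0 < p) (hq : 0 < q) (hk : 0 < k)
    (hn0 : 0 < n) (hn : n ≤ p / (k + 1) * (q + 1) + q + k - 1) (hpk : k + 1 ≤ p)
    (V : Type) [Fintype V] (hcard : Fintype.card V = n)
    (G : SimpleGraph V) (htw : twLE G k) :
    ∃ S : Finset V, S.card ≤ p ∧ CompsLE G (↑S) q := by 
  classical
  obtain ⟨T, TG, B, ⟨ht, hcov, hecov, hsupp⟩, hw⟩ := htw
  have hV : Nonempty V := by
    rw [← Fintype.card_pos_iff, hcard]
    exact hn0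
  obtain ⟨d0, hraw, hvs0⟩ := TWaux.extract hV ht hcov hecov hsupp hw
  obtain ⟨hgood, hvs, hbag⟩ := TWaux.RT.nicify_ok d0 hraw ∅ (by simp)
  rw [hvs0] at hvs
  have hbag' : (TWaux.RT.nicify ∅ d0).bag = ∅ := by rw [hbag, Finset.inter_empty]
  have hr1 : 1 ≤ p / (k + 1) := (Nat.one_le_div_iff (by omega)).mpr hpk
  have hsub : p / (k + 1) - 1 + 1 = p / (k + 1) := by omega
  have hN : (TWaux.RT.nicify ∅ d0).vs.card + 1 ≤
      (p / (k + 1) - 1 + 1) * (q + 1) + q + k := by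
    rw [hsub, hvs, Finset.card_univ, hcard]
    omega
  obtain ⟨S, hS1, hS2, hS3⟩ := TWaux.RT.rec_main hq (p / (k + 1) - 1)
    (TWaux.RT.nicify ∅ d0) hgood hbag' hN
  refine ⟨S, ?_, ?_⟩
  · rw [hsub] at hS2
    exact hS2.trans (Nat.div_mul_le_self p (k + 1))
  · have hset : (((TWaux.RT.nicify ∅ d0).vs \ S : Finset V) : Set V) = (↑S)ᶜ := by
      rw [hvs]
      ext x
      simp
    rw [hset] at hS3
    exact hS3
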